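/- Let G be an abelian group of order t⁴c² with subgroups H ≤ U ≤ V ≤ G of orders t, t²c, t³c² respectively. Suppose there exists a (tc,t) LP-partition {R₁,…,R_t} in G−V relative to H, and a (c,t) LP-packing {P₁,…,P_t} in V/H relative to U/H. Let P'_i be the preimage of P_i in V under the quotient map. Then {P'₁ ∪ R₁, …, P'_t ∪ R_t} is a (tc,t) LP-packing in G relative to U. -/

import Mathlib

open Finset BigOperators

variable {G : Type*}

/-- Number of ordered pairs `(x,y)` with `x,y ∈ D`, `x ≠ y`, `x * y⁻¹ = g`. -/
noncomputable def diffCount [Group G] (D : Set G) (g : G) : ℕ :=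
  Nat.card {p : G × G // p.1 ∈ D ∧ p.2 ∈ D ∧ p.1 ≠ p.2 ∧ p.1 * p.2⁻¹ = g}

/-- `D` is a `(v,k,λ,μ)` partial difference set in `G`. -/
def IsPDS [Group G] (D : Set G) (v k : ℕ) (l m : ℤ) : Prop :=
  Nat.card G = v ∧ Nat.card D = k ∧
    ∀ g : G, g ≠ 1 →
      (g ∈ D → (diffCount D g : ℤ) = l) ∧ (g ∉ D → (diffCount D g : ℤ) = m)

/-- A regular PDS: a PDS avoiding the identity and closed under inversion. -/
def IsRegularPDS [Group G] (D : Set G) (v k : ℕ) (l m : ℤ) : Prop :=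
  IsPDS D v k l m ∧ (1 : G) ∉ D ∧ D⁻¹ = D

/-- A regular `(n,r)` Latin square type PDS. -/
def IsLatinPDS [Group G] (D : Set G) (n r : ℕ) : Prop :=
  IsRegularPDS D (n ^ 2) (r * (n - 1)) ((n : ℤ) + (r : ℤ) ^ 2 - 3 * r) ((r : ℤ) ^ 2 - r)

/-- A regular `(n,r)` negative Latin square type PDS. -/
def IsNegLatinPDS [Group G] (D : Set G) (n r : ℕ) : Prop :=
  IsRegularPDS D (n ^ 2) (r * (n + 1)) (-(n : ℤ) + (r : ℤ) ^ 2 + 3 * r) ((r : ℤ) ^ 2 + r)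

/-- Character sum `χ(D) = ∑_{d ∈ D} χ(d)`. -/
noncomputable def charSum [Group G] (χ : G →* ℂˣ) (D : Set G) : ℂ :=
  ∑ᶠ d ∈ D, (χ d : ℂ)

/-- The multiset of character sums `{χ(P 0), …, χ(P (t-1))}`. -/
noncomputable def charMultiset [Group G] {t : ℕ} (χ : G →* ℂˣ) (P : Fin t → Set G) :
    Multiset ℂ :=
  (Finset.univ.val : Multiset (Fin t)).map fun i => charSum χ (P i)

/-- `χ` is principal on the subgroup `U`. -/
def IsPrincipalOn [Group G] (χ : G →* ℂˣ) (U : Subgroup G) : Prop :=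
  ∀ u ∈ U, χ u = 1

/-- A `(c,t)` LP-packing in `G` relative to `U`. -/
def IsLPPacking [CommGroup G] (c t : ℕ) (P : Fin t → Set G) (U : Subgroup G) : Prop :=
  Nat.card G = t ^ 2 * c ^ 2 ∧ Nat.card U = t * c ∧
    (∀ i, IsLatinPDS (P i) (t * c) c) ∧
    (∀ i j, i ≠ j → Disjoint (P i) (P j)) ∧
    (⋃ i, P i) = Set.univ \ (U : Set G)

/-- A `(c,t-1)` NLP-packing in `G`. -/
def IsNLPPacking [CommGroup G] (c t : ℕ) (P : Fin (t - 1) → Set G) : Prop :=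
  Nat.card G = t ^ 2 * c ^ 2 ∧
    (∀ i, IsNegLatinPDS (P i) (t * c) c) ∧
    IsNegLatinPDS (Set.univ \ ({1} ∪ ⋃ i, P i)) (t * c) (c - 1)

/-- A `(c,t)` LP-partition in `G − V` relative to `H`. -/
def IsLPPartition [CommGroup G] (c t : ℕ) (R : Fin t → Set G) (V H : Subgroup G) : Prop :=
  Nat.card G = t ^ 2 * c ^ 2 ∧ Nat.card V = t * c ^ 2 ∧ H ≤ V ∧
    (∀ i, Nat.card (R i) = (t - 1) * c ^ 2) ∧
    (∀ i j, i ≠ j → Disjoint (R i) (R j)) ∧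
    (⋃ i, R i) = Set.univ \ (V : Set G) ∧
    ∀ χ : G →* ℂˣ, χ ≠ 1 →
      (IsPrincipalOn χ V → charMultiset χ R = Multiset.replicate t (-(c : ℂ) ^ 2)) ∧
      (¬ IsPrincipalOn χ V → IsPrincipalOn χ H →
        charMultiset χ R = Multiset.replicate t 0) ∧
      (¬ IsPrincipalOn χ H →
        charMultiset χ R = ((t : ℂ) - 1) * (c : ℂ) ::ₘ Multiset.replicate (t - 1) (-(c : ℂ)))


open scoped Classical

namespace LP

variable {G : Type*} [CommGroup G] [Fintype G]

lemma charSum_eq_sum (χ : G →* ℂˣ) (D : Set G) :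
    charSum χ D = ∑ d ∈ (Set.toFinite D).toFinset, (χ d : ℂ) := by
  rw [charSum, ← finsum_mem_coe_finset, Set.Finite.coe_toFinset]

/-- Translation trick: if `x * D ⊆ D` and `χ x ≠ 1` then `charSum χ D = 0`. -/
lemma charSum_eq_zero_of_smul (χ : G →* ℂˣ) (D : Set G) (x : G) (hx : (χ x : ℂ) ≠ 1)
    (hD : ∀ d ∈ D, x * d ∈ D) : charSum χ D = 0 := by
  classical
  set s := (Set.toFinite D).toFinset with hs
  have himg : s.image (fun d => x * d) = s := by
    apply Finset.eq_of_subset_of_card_le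
    · intro y hy
      simp only [Finset.mem_image] at hy
      obtain ⟨d, hd, rfl⟩ := hy
      rw [hs, Set.Finite.mem_toFinset] at hd ⊢
      exact hD d hd
    · rw [Finset.card_image_of_injective _ (mul_right_injective x)]
  have h1 : ∑ d ∈ s, (χ d : ℂ) = ∑ d ∈ s, (χ (x * d) : ℂ) := by
    conv_lhs => rw [← himg]
    rw [Finset.sum_image (fun a _ b _ h => mul_right_injective x h)]
  have h2 : ∑ d ∈ s, (χ (x * d) : ℂ) = (χ x : ℂ) * ∑ d ∈ s, (χ d : ℂ) := by
    rw [Finset.mul_sum]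
    exact Finset.sum_congr rfl fun d _ => by rw [map_mul, Units.val_mul]
  have h3 : ((χ x : ℂ) - 1) * ∑ d ∈ s, (χ d : ℂ) = 0 := by
    rw [sub_mul, one_mul, ← h2, ← h1, sub_self]
  rw [charSum_eq_sum]
  rcases mul_eq_zero.mp h3 with h | h
  · exact absurd (by linear_combination h) hx
  · exact h

lemma charSum_univ_eq_zero (χ : G →* ℂˣ) (hχ : χ ≠ 1) : charSum χ Set.univ = 0 := by
  obtain ⟨x, hx⟩ : ∃ x, χ x ≠ 1 := by
    by_contra h
    push_neg at h
    exact hχ (MonoidHom.ext fun x => by rw [h x]; rfl)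
  refine charSum_eq_zero_of_smul χ _ x (fun h => hx (Units.ext h)) (fun d _ => trivial)

lemma sum_char_eq_zero (χ : G →* ℂˣ) (hχ : χ ≠ 1) : ∑ g : G, (χ g : ℂ) = 0 := by
  have := charSum_univ_eq_zero χ hχ
  rw [charSum_eq_sum] at this
  rw [← this]
  apply Finset.sum_congr _ (fun _ _ => rfl)
  ext g; simp

lemma charSum_const_one (χ : G →* ℂˣ) (D : Set G) (h : ∀ d ∈ D, (χ d : ℂ) = 1) :
    charSum χ D = (Nat.card D : ℂ) := by
  rw [charSum_eq_sum, Finset.sum_congr rfl (fun d hd => h d ((Set.Finite.mem_toFinset _).mp hd)),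
    Finset.sum_const, nsmul_eq_mul, mul_one, Nat.card_coe_set_eq,
    Set.ncard_eq_toFinset_card D (Set.toFinite D)]


section Dual
variable (G : Type*) [CommGroup G] [Finite G]

instance instHERU : HasEnoughRootsOfUnity ℂ (Monoid.exponent G) := by
  have : NeZero ((Monoid.exponent G : ℂ)) :=
    ⟨Nat.cast_ne_zero.mpr Monoid.exponent_ne_zero_of_finite⟩
  infer_instance

instance dual_finite : Finite (G →* ℂˣ) :=
  Finite.of_equiv G (CommGroup.monoidHom_mulEquiv_of_hasEnoughRootsOfUnity G ℂ).some.symm.toEquiv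

lemma card_dual : Nat.card (G →* ℂˣ) = Nat.card G :=
  Nat.card_congr (CommGroup.monoidHom_mulEquiv_of_hasEnoughRootsOfUnity G ℂ).some.toEquiv

variable {G}

/-- Evaluation at `g` as a character of the dual group. -/
def evalHom (g : G) : (G →* ℂˣ) →* ℂˣ where
  toFun χ := χ g
  map_one' := rfl
  map_mul' _ _ := rfl

lemma sum_dual [Fintype (G →* ℂˣ)] (g : G) :
    ∑ χ : G →* ℂˣ, (χ g : ℂ) = if g = 1 then (Nat.card G : ℂ) else 0 := by
  by_cases hg : g = 1
  · subst hg
    simp only [map_one, Units.val_one, if_true, Finset.sum_const, Finset.card_univ,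
      nsmul_eq_mul, mul_one]
    rw [← Nat.card_eq_fintype_card, card_dual]
  · rw [if_neg hg]
    obtain ⟨χ₀, hχ₀⟩ := CommGroup.exists_apply_ne_one_of_hasEnoughRootsOfUnity G ℂ hg
    have hev : evalHom g ≠ 1 := fun h => hχ₀ (DFunLike.congr_fun h χ₀)
    exact sum_char_eq_zero (evalHom g) hev

lemma inversion [Fintype G] (a : G → ℂ)
    (h : ∀ χ : G →* ℂˣ, ∑ g : G, a g * (χ g : ℂ) = 0) (g₀ : G) : a g₀ = 0 := by
  letI : Fintype (G →* ℂˣ) := Fintype.ofFinite _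
  classical
  have key : ∀ (χ : G →* ℂˣ) (g : G), (χ g : ℂ) * ((χ g₀ : ℂ))⁻¹ = (χ (g * g₀⁻¹) : ℂ) := by
    intro χ g
    rw [map_mul, map_inv, Units.val_mul, ← Units.val_inv_eq_inv_val]
  have H : (0 : ℂ) = ∑ g : G, a g * (if g * g₀⁻¹ = 1 then (Nat.card G : ℂ) else 0) := by
    calc (0 : ℂ) = ∑ χ : G →* ℂˣ, (∑ g : G, a g * (χ g : ℂ)) * ((χ g₀ : ℂ))⁻¹ := by
          simp [h]
      _ = ∑ χ : G →* ℂˣ, ∑ g : G, a g * (χ (g * g₀⁻¹) : ℂ) := by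
          refine Finset.sum_congr rfl fun χ _ => ?_
          rw [Finset.sum_mul]
          exact Finset.sum_congr rfl fun g _ => by rw [mul_assoc, key]
      _ = ∑ g : G, ∑ χ : G →* ℂˣ, a g * (χ (g * g₀⁻¹) : ℂ) := Finset.sum_comm
      _ = ∑ g : G, a g * (if g * g₀⁻¹ = 1 then (Nat.card G : ℂ) else 0) := by
          refine Finset.sum_congr rfl fun g _ => ?_
          rw [← Finset.mul_sum, sum_dual]
  have H2 : (0 : ℂ) = a g₀ * (Nat.card G : ℂ) := by
    rw [H, Finset.sum_eq_single g₀]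
    · simp
    · intro g _ hg
      rw [if_neg (by simpa [mul_inv_eq_one] using hg), mul_zero]
    · exact fun habs => absurd (Finset.mem_univ g₀) habs
  have hcard : (Nat.card G : ℂ) ≠ 0 := Nat.cast_ne_zero.mpr Nat.card_pos.ne'
  rcases mul_eq_zero.mp H2.symm with h' | h'
  · exact h'
  · exact absurd h' hcard

end Dual

section SetEq
variable {G : Type*} [CommGroup G] [Finite G]

lemma charSum_eq_sum_ite [Fintype G] (χ : G →* ℂˣ) (D : Set G) :
    charSum χ D = ∑ g : G, (if g ∈ D then (χ g : ℂ) else 0) := by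
  rw [charSum_eq_sum, ← Finset.sum_filter]
  apply Finset.sum_congr _ (fun _ _ => rfl)
  ext g; simp

lemma eq_of_charSum_eq [Fintype G] (D E : Set G)
    (h : ∀ χ : G →* ℂˣ, charSum χ D = charSum χ E) : D = E := by
  have key : ∀ g : G, ((if g ∈ D then (1:ℂ) else 0) - (if g ∈ E then (1:ℂ) else 0)) = 0 := by
    refine inversion _ (fun χ => ?_)
    have hDs : ∀ (S : Set G), ∑ g : G, (if g ∈ S then (1:ℂ) else 0) * (χ g : ℂ) = charSum χ S := by
      intro S
      rw [charSum_eq_sum_ite]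
      exact Finset.sum_congr rfl fun g _ => by by_cases hg : g ∈ S <;> simp [hg]
    simp only [sub_mul, Finset.sum_sub_distrib, hDs, h χ, sub_self]
  ext g
  have := key g
  by_cases hD : g ∈ D <;> by_cases hE : g ∈ E <;> simp [hD, hE] at this ⊢

end SetEq

section Conv
variable {G : Type*} [CommGroup G] [Fintype G]

lemma sum_indicator (f : G → ℂ) (D : Set G) :
    ∑ d ∈ (Set.toFinite D).toFinset, f d = ∑ g : G, (if g ∈ D then f g else 0) := by
  rw [← Finset.sum_filter]
  apply Finset.sum_congr _ (fun _ _ => rfl)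
  ext g; simp

lemma val_char_inv_eq_conj (χ : G →* ℂˣ) (g : G) :
    ((χ g : ℂ))⁻¹ = (starRingEnd ℂ) (χ g : ℂ) := by
  have hz : (χ g : ℂ) ^ (Fintype.card G) = 1 := by
    rw [← Units.val_pow_eq_pow_val, ← map_pow, pow_card_eq_one, map_one, Units.val_one]
  have hn : ‖(χ g : ℂ)‖ = 1 :=
    Complex.norm_eq_one_of_pow_eq_one hz Fintype.card_ne_zero
  exact Complex.inv_eq_conj hn

lemma charSum_inv_eq_sum (χ : G →* ℂˣ) (D : Set G) :
    charSum χ (D⁻¹) = ∑ g : G, (if g ∈ D then ((χ g : ℂ))⁻¹ else 0) := by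
  rw [charSum_eq_sum_ite]
  apply Fintype.sum_equiv (Equiv.inv G)
  intro x
  simp only [Equiv.inv_apply]
  by_cases hx : x ∈ D⁻¹
  · have hx' : x⁻¹ ∈ D := hx
    rw [if_pos hx, if_pos hx']
    rw [← Units.val_inv_eq_inv_val, ← map_inv, inv_inv]
  · have hx' : x⁻¹ ∉ D := hx
    rw [if_neg hx, if_neg hx']

lemma charSum_inv_eq_conj (χ : G →* ℂˣ) (D : Set G) :
    charSum χ (D⁻¹) = (starRingEnd ℂ) (charSum χ D) := by
  rw [charSum_inv_eq_sum, charSum_eq_sum_ite, map_sum]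
  refine Finset.sum_congr rfl fun g _ => ?_
  by_cases hg : g ∈ D
  · rw [if_pos hg, if_pos hg, val_char_inv_eq_conj]
  · rw [if_neg hg, if_neg hg, map_zero]

lemma charSum_union_disjoint (χ : G →* ℂˣ) (D E : Set G) (h : Disjoint D E) :
    charSum χ (D ∪ E) = charSum χ D + charSum χ E := by
  rw [charSum_eq_sum_ite, charSum_eq_sum_ite, charSum_eq_sum_ite, ← Finset.sum_add_distrib]
  refine Finset.sum_congr rfl fun g _ => ?_
  by_cases hD : g ∈ D
  · have hE : g ∉ E := Set.disjoint_left.mp h hD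
    simp [hD, hE]
  · by_cases hE : g ∈ E <;> simp [hD, hE]

lemma charSum_subgroup_principal (χ : G →* ℂˣ) (W : Subgroup G) (h : IsPrincipalOn χ W) :
    charSum χ (W : Set G) = (Nat.card W : ℂ) := by
  rw [charSum_const_one χ _ (fun d hd => by rw [h d hd, Units.val_one])]
  congr 1

lemma charSum_subgroup_nonprincipal (χ : G →* ℂˣ) (W : Subgroup G) (h : ¬ IsPrincipalOn χ W) :
    charSum χ (W : Set G) = 0 := by
  simp only [IsPrincipalOn, not_forall] at h
  obtain ⟨x, hxW, hx⟩ := h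
  refine charSum_eq_zero_of_smul χ _ x (fun h1 => hx ?_) (fun d hd => W.mul_mem hxW hd)
  exact Units.ext h1

/-- The "difference function" counting pairs `(x, y) ∈ D × D` with `x * y⁻¹ = g`. -/
noncomputable def convC (D : Set G) (g : G) : ℕ :=
  ((Set.toFinite {p : G × G | p.1 ∈ D ∧ p.2 ∈ D ∧ p.1 * p.2⁻¹ = g}).toFinset).card

lemma convC_eq_filter_card (D : Set G) (g : G) :
    convC D g = (((Set.toFinite D).toFinset ×ˢ (Set.toFinite D).toFinset).filter
      (fun p => p.1 * p.2⁻¹ = g)).card := by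
  unfold convC
  congr 1
  ext p
  simp [Set.Finite.mem_toFinset, Finset.mem_filter, Finset.mem_product, and_assoc, Set.mem_setOf_eq]

lemma sum_convC (χ : G →* ℂˣ) (D : Set G) :
    ∑ g : G, (convC D g : ℂ) * (χ g : ℂ) = charSum χ D * charSum χ (D⁻¹) := by
  have h1 : ∀ g : G, (convC D g : ℂ) * (χ g : ℂ) =
      ∑ p ∈ ((Set.toFinite D).toFinset ×ˢ (Set.toFinite D).toFinset).filter
        (fun p => p.1 * p.2⁻¹ = g), (χ (p.1 * p.2⁻¹) : ℂ) := by
    intro g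
    rw [Finset.sum_congr rfl (fun p hp => by rw [(Finset.mem_filter.mp hp).2]),
      Finset.sum_const, nsmul_eq_mul, convC_eq_filter_card]
  have h1' : ∑ g : G, (convC D g : ℂ) * (χ g : ℂ) =
      ∑ p ∈ (Set.toFinite D).toFinset ×ˢ (Set.toFinite D).toFinset, (χ (p.1 * p.2⁻¹) : ℂ) := by
    rw [Finset.sum_congr rfl (fun g _ => h1 g)]
    exact Finset.sum_fiberwise _ _ _
  rw [h1', Finset.sum_product]
  have h2 : ∀ x : G, ∑ y ∈ (Set.toFinite D).toFinset, (χ (x * y⁻¹) : ℂ) =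
      (χ x : ℂ) * ∑ y ∈ (Set.toFinite D).toFinset, ((χ y : ℂ))⁻¹ := by
    intro x
    rw [Finset.mul_sum]
    refine Finset.sum_congr rfl fun y _ => ?_
    rw [map_mul, Units.val_mul, map_inv, ← Units.val_inv_eq_inv_val]
  rw [Finset.sum_congr rfl (fun x _ => h2 x), ← Finset.sum_mul]
  congr 1
  · rw [charSum_eq_sum]
  · rw [charSum_inv_eq_sum, sum_indicator]

lemma convC_one (D : Set G) : convC D 1 = Nat.card D := by
  have hset : {p : G × G | p.1 ∈ D ∧ p.2 ∈ D ∧ p.1 * p.2⁻¹ = 1} =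
      (fun d => (d, d)) '' D := by
    ext ⟨a, b⟩
    simp only [Set.mem_setOf_eq, Set.mem_image, Prod.mk.injEq, mul_inv_eq_one]
    constructor
    · rintro ⟨ha, _, rfl⟩; exact ⟨a, ha, rfl, rfl⟩
    · rintro ⟨d, hd, rfl, rfl⟩; exact ⟨hd, hd, rfl⟩
  unfold convC
  rw [← Set.ncard_eq_toFinset_card _ _, hset,
    Set.ncard_image_of_injective D (fun a b h => (Prod.mk.injEq _ _ _ _).mp h |>.1),
    Nat.card_coe_set_eq]

lemma convC_ne_one (D : Set G) (g : G) (hg : g ≠ 1) : (diffCount D g) = convC D g := by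
  unfold diffCount convC
  rw [← Set.ncard_eq_toFinset_card _ _, ← Nat.card_coe_set_eq]
  apply Nat.card_congr
  apply Equiv.subtypeEquivRight
  rintro ⟨a, b⟩
  simp only [Set.mem_setOf_eq]
  constructor
  · rintro ⟨h1, h2, _, h4⟩; exact ⟨h1, h2, h4⟩
  · rintro ⟨h1, h2, h4⟩
    refine ⟨h1, h2, fun hab => hg ?_, h4⟩
    rw [← h4, hab, mul_inv_cancel]

end Conv

section PDS
variable {G : Type*} [CommGroup G] [Fintype G]

lemma sum_T (D : Set G) (h1 : (1:G) ∉ D) (k l m : ℂ) (χ : G →* ℂˣ) :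
    ∑ g : G, (if g = 1 then k else if g ∈ D then l else m) * (χ g : ℂ)
      = k + l * charSum χ D + m * ((∑ g : G, (χ g : ℂ)) - 1 - charSum χ D) := by
  have hpt : ∀ g : G, (if g = 1 then k else if g ∈ D then l else m) * (χ g : ℂ)
      = (if g = 1 then k * (χ g : ℂ) else 0) + (if g ∈ D then l * (χ g : ℂ) else 0)
        + m * ((χ g : ℂ) - (if g = 1 then (χ g : ℂ) else 0) - (if g ∈ D then (χ g : ℂ) else 0)) := by
    intro g
    by_cases hg : g = 1
    · subst hg
      simp [h1]
    · by_cases hgD : g ∈ D <;> simp [hg, hgD] <;> ring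
  rw [Finset.sum_congr rfl (fun g _ => hpt g)]
  rw [Finset.sum_add_distrib, Finset.sum_add_distrib, ← Finset.mul_sum,
    Finset.sum_sub_distrib, Finset.sum_sub_distrib]
  have e1 : ∑ g : G, (if g = 1 then k * (χ g : ℂ) else 0) = k := by
    rw [Finset.sum_ite_eq' Finset.univ (1:G) (fun g => k * (χ g : ℂ))]
    simp
  have e2 : ∑ g : G, (if g ∈ D then l * (χ g : ℂ) else 0) = l * charSum χ D := by
    rw [charSum_eq_sum_ite, Finset.mul_sum]
    exact Finset.sum_congr rfl fun g _ => by by_cases hgD : g ∈ D <;> simp [hgD]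
  have e3 : ∑ g : G, (if g = 1 then (χ g : ℂ) else 0) = 1 := by
    rw [Finset.sum_ite_eq' Finset.univ (1:G) (fun g => (χ g : ℂ))]
    simp
  rw [e1, e2, e3, ← charSum_eq_sum_ite]

lemma isPDS_of_charSum (D : Set G) (v k : ℕ) (l m : ℤ)
    (hv : Nat.card G = v) (hk : Nat.card D = k) (h1 : (1:G) ∉ D) (hsym : D⁻¹ = D)
    (hprin : (k:ℂ)^2 = (k:ℂ) + (l:ℂ)*(k:ℂ) + (m:ℂ)*((v:ℂ) - 1 - (k:ℂ)))
    (hchi : ∀ χ : G →* ℂˣ, χ ≠ 1 →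
      charSum χ D ^ 2 = (k:ℂ) + (l:ℂ) * charSum χ D + (m:ℂ) * (0 - 1 - charSum χ D)) :
    IsPDS D v k l m := by
  have main : ∀ g : G, (convC D g : ℂ) =
      (if g = 1 then (k:ℂ) else if g ∈ D then (l:ℂ) else (m:ℂ)) := by
    intro g₀
    have hz := inversion (fun g => (convC D g : ℂ) -
        (if g = 1 then (k:ℂ) else if g ∈ D then (l:ℂ) else (m:ℂ))) ?_ g₀
    · exact sub_eq_zero.mp hz
    · intro χ
      rw [Finset.sum_congr rfl (fun g _ => sub_mul _ _ _), Finset.sum_sub_distrib,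
        sum_convC, hsym, sum_T D h1 _ _ _ χ]
      by_cases hχ : χ = 1
      · subst hχ
        have hS : ∑ g : G, (((1 : G →* ℂˣ) g : ℂ)) = (v : ℂ) := by
          simp only [MonoidHom.one_apply, Units.val_one, Finset.sum_const, Finset.card_univ,
            nsmul_eq_mul, mul_one]
          rw [← Nat.card_eq_fintype_card, hv]
        have hD : charSum (1 : G →* ℂˣ) D = (k : ℂ) := by
          rw [charSum_const_one _ D (fun d _ => by simp), hk]
        rw [hS, hD]
        linear_combination hprin
      · rw [sum_char_eq_zero χ hχ]
        linear_combination hchi χ hχ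
  refine ⟨hv, hk, fun g hg => ⟨fun hgD => ?_, fun hgD => ?_⟩⟩
  · have := main g
    rw [if_neg hg, if_pos hgD] at this
    have h2 : ((diffCount D g : ℤ) : ℂ) = ((l : ℤ) : ℂ) := by
      push_cast
      rw [convC_ne_one D g hg, this]
    exact_mod_cast h2
  · have := main g
    rw [if_neg hg, if_neg hgD] at this
    have h2 : ((diffCount D g : ℤ) : ℂ) = ((m : ℤ) : ℂ) := by
      push_cast
      rw [convC_ne_one D g hg, this]
    exact_mod_cast h2

lemma charSum_sq_of_isPDS (D : Set G) (v k : ℕ) (l m : ℤ) (hpds : IsPDS D v k l m)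
    (h1 : (1:G) ∉ D) (hsym : D⁻¹ = D) (χ : G →* ℂˣ) (hχ : χ ≠ 1) :
    charSum χ D ^ 2 = (k:ℂ) + (l:ℂ) * charSum χ D + (m:ℂ) * (0 - 1 - charSum χ D) := by
  have hc : ∀ g : G, (convC D g : ℂ) =
      (if g = 1 then (k:ℂ) else if g ∈ D then (l:ℂ) else (m:ℂ)) := by
    intro g
    by_cases hg : g = 1
    · subst hg
      rw [if_pos rfl, convC_one, hpds.2.1]
    · rw [if_neg hg, ← convC_ne_one D g hg]
      rcases hpds.2.2 g hg with ⟨hin, hout⟩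
      by_cases hgD : g ∈ D
      · rw [if_pos hgD]
        exact_mod_cast congrArg (fun z : ℤ => (z : ℂ)) (hin hgD)
      · rw [if_neg hgD]
        exact_mod_cast congrArg (fun z : ℤ => (z : ℂ)) (hout hgD)
  calc charSum χ D ^ 2 = charSum χ D * charSum χ D⁻¹ := by rw [hsym, sq]
    _ = ∑ g : G, (convC D g : ℂ) * (χ g : ℂ) := (sum_convC χ D).symm
    _ = ∑ g : G, (if g = 1 then (k:ℂ) else if g ∈ D then (l:ℂ) else (m:ℂ)) * (χ g : ℂ) :=
        Finset.sum_congr rfl fun g _ => by rw [hc]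
    _ = (k:ℂ) + (l:ℂ) * charSum χ D
        + (m:ℂ) * ((∑ g : G, (χ g : ℂ)) - 1 - charSum χ D) := sum_T D h1 _ _ _ χ
    _ = (k:ℂ) + (l:ℂ) * charSum χ D + (m:ℂ) * (0 - 1 - charSum χ D) := by
        rw [sum_char_eq_zero χ hχ]

lemma latin_charSum_mem (D : Set G) (n r : ℕ) (hn : 1 ≤ n) (h : IsLatinPDS D n r)
    (χ : G →* ℂˣ) (hχ : χ ≠ 1) : charSum χ D = (n:ℂ) - (r:ℂ) ∨ charSum χ D = -(r:ℂ) := by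
  obtain ⟨hpds, h1, hsym⟩ := h
  have hq := charSum_sq_of_isPDS D _ _ _ _ hpds h1 hsym χ hχ
  have hkc : ((r * (n-1) : ℕ) : ℂ) = (r:ℂ) * ((n:ℂ) - 1) := by
    push_cast [Nat.cast_sub hn]
    ring
  rw [hkc] at hq
  have factored : (charSum χ D - ((n:ℂ) - (r:ℂ))) * (charSum χ D + (r:ℂ)) = 0 := by
    push_cast at hq ⊢
    linear_combination hq
  rcases mul_eq_zero.mp factored with h | h
  · exact Or.inl (sub_eq_zero.mp h)
  · exact Or.inr (eq_neg_of_add_eq_zero_left h)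

lemma isLatinPDS_of_charSum (D : Set G) (n r : ℕ) (hn : 1 ≤ n)
    (hv : Nat.card G = n^2) (hk : Nat.card D = r * (n-1)) (h1 : (1:G) ∉ D) (hsym : D⁻¹ = D)
    (hchi : ∀ χ : G →* ℂˣ, χ ≠ 1 → charSum χ D = (n:ℂ) - (r:ℂ) ∨ charSum χ D = -(r:ℂ)) :
    IsLatinPDS D n r := by
  have hkc : ((r * (n-1) : ℕ) : ℂ) = (r:ℂ) * ((n:ℂ) - 1) := by
    push_cast [Nat.cast_sub hn]
    ring
  refine ⟨isPDS_of_charSum D _ _ _ _ hv hk h1 hsym ?_ ?_, h1, hsym⟩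
  · rw [hkc]
    push_cast
    ring
  · intro χ hχ
    rcases hchi χ hχ with h | h <;> rw [h, hkc] <;> push_cast <;> ring

end PDS

section Quot
variable {K : Type*} [CommGroup K] [Fintype K]

lemma sum_quotient_fiber (N : Subgroup K) [Fintype (K ⧸ N)] (f : K ⧸ N → ℂ) :
    ∑ v : K, f ((QuotientGroup.mk v : K ⧸ N)) = (Nat.card N : ℂ) * ∑ q : K ⧸ N, f q := by
  have hfib : ∀ q : K ⧸ N,
      (Finset.univ.filter fun v : K => (QuotientGroup.mk v : K ⧸ N) = q).card = Nat.card N := by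
    intro q
    have hEq : (Finset.univ.filter fun v : K => (QuotientGroup.mk v : K ⧸ N) = q)
        = (Set.toFinite ((QuotientGroup.mk (s := N)) ⁻¹' {q})).toFinset := by
      ext v; simp
    rw [hEq, ← Set.ncard_eq_toFinset_card _ _, ← Nat.card_coe_set_eq,
      Nat.card_congr (QuotientGroup.preimageMkEquivSubgroupProdSet N {q}), Nat.card_prod]
    simp [Nat.card_coe_set_eq]
  have h0 : ∑ v : K, f ((QuotientGroup.mk v : K ⧸ N)) =
      ∑ q : K ⧸ N, ∑ _v ∈ Finset.univ.filter
        (fun v : K => (QuotientGroup.mk v : K ⧸ N) = q), f q :=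
    (Finset.sum_fiberwise' Finset.univ _ f).symm
  rw [h0, Finset.mul_sum]
  refine Finset.sum_congr rfl fun q _ => ?_
  rw [Finset.sum_const, hfib q, nsmul_eq_mul]

lemma card_preimage_quotient (N : Subgroup K) (S : Set (K ⧸ N)) :
    Nat.card ((QuotientGroup.mk (s := N)) ⁻¹' S) = Nat.card N * Nat.card S := by
  rw [Nat.card_congr (QuotientGroup.preimageMkEquivSubgroupProdSet N S), Nat.card_prod]

end Quot

section ImageVal
variable {G : Type*} [CommGroup G] [Finite G]

lemma charSum_image_val (W : Subgroup G) (χ : G →* ℂˣ) (S : Set ↥W) :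
    charSum χ (Subtype.val '' S) = ∑ v ∈ (Set.toFinite S).toFinset, (χ ↑v : ℂ) := by
  have hEq : (Set.toFinite (Subtype.val '' S)).toFinset
      = ((Set.toFinite S).toFinset).image Subtype.val := by
    ext x; simp
  letI : Fintype G := Fintype.ofFinite G
  rw [charSum_eq_sum, hEq, Finset.sum_image (fun a _ b _ h => Subtype.val_injective h)]

end ImageVal

end LP

open LP in
theorem stmt_11 {G : Type*} [CommGroup G] [Finite G] (c t : ℕ)
    (H U V : Subgroup G) (hHU : H ≤ U) (hUV : U ≤ V)
    (hG : Nat.card G = t ^ 4 * c ^ 2) (hH : Nat.card H = t)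
    (hU : Nat.card U = t ^ 2 * c) (hV : Nat.card V = t ^ 3 * c ^ 2)
    (R : Fin t → Set G) (hR : IsLPPartition (t * c) t R V H)
    (P : Fin t → Set (V ⧸ H.subgroupOf V))
    (hP : IsLPPacking c t P ((U.subgroupOf V).map (QuotientGroup.mk' (H.subgroupOf V)))) :
    IsLPPacking (t * c) t
      (fun i =>
        (Subtype.val '' ((QuotientGroup.mk (s := H.subgroupOf V)) ⁻¹' P i)) ∪ R i) U := by
  classical
  letI : Fintype G := Fintype.ofFinite G
  letI : Fintype ↥V := Fintype.ofFinite ↥V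
  letI : Finite (V ⧸ H.subgroupOf V) := Quotient.finite _
  letI : Fintype (V ⧸ H.subgroupOf V) := Fintype.ofFinite _
  obtain ⟨hRG, hRV, hRHV, hRcard, hRdisj, hRunion, hRchar⟩ := hR
  obtain ⟨hPQ, hPU, hPlatin, hPdisj, hPunion⟩ := hP
  let N : Subgroup ↥V := H.subgroupOf V
  let P' : Fin t → Set G :=
    fun i => Subtype.val '' ((QuotientGroup.mk (s := N)) ⁻¹' P i)
  -- positivity
  have hGpos : 0 < Nat.card G := Nat.card_pos
  have ht : 1 ≤ t := by
    rcases Nat.eq_zero_or_pos t with h | h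
    · rw [h] at hG; simp at hG
    · exact h
  have hc : 1 ≤ c := by
    rcases Nat.eq_zero_or_pos c with h | h
    · rw [h] at hG; simp at hG
    · exact h
  have htc : 1 ≤ t * c := Nat.mul_pos ht hc
  have httc : 1 ≤ t * (t * c) := Nat.mul_pos ht htc
  have hNcard : Nat.card N = t := by
    rw [Nat.card_congr (Subgroup.subgroupOfEquivOfLe (hHU.trans hUV)).toEquiv, hH]
  -- basic set facts
  have hPV : ∀ i, P' i ⊆ (V : Set G) := by
    rintro i x ⟨v, _, rfl⟩; exact v.2
  have hRV' : ∀ i, R i ⊆ Set.univ \ (V : Set G) := fun i => hRunion ▸ Set.subset_iUnion R i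
  have hdisjPR : ∀ i j, Disjoint (P' i) (R j) := by
    intro i j
    rw [Set.disjoint_left]
    intro x hx hxR
    exact (hRV' j hxR).2 (hPV i hx)
  have hPone : ∀ i, (1 : G) ∉ P' i := by
    rintro i ⟨v, hv, hv1⟩
    have : v = 1 := Subtype.val_injective hv1
    rw [this] at hv
    exact (hPlatin i).2.1 (by simpa using hv)
  have hDone : ∀ i, (1 : G) ∉ P' i ∪ R i := by
    intro i h
    rcases h with h | h
    · exact hPone i h
    · exact (hRV' i h).2 V.one_mem
  -- cardinalities
  have hcardP' : ∀ i, Nat.card (P' i) = t * (c * (t * c - 1)) := by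
    intro i
    show Nat.card ↥(Subtype.val '' ((QuotientGroup.mk (s := N)) ⁻¹' P i)) = _
    rw [Nat.card_coe_set_eq, Set.ncard_image_of_injective _ Subtype.val_injective,
      ← Nat.card_coe_set_eq, card_preimage_quotient, hNcard, (hPlatin i).1.2.1]
  have hcardD : ∀ i, Nat.card ↥(P' i ∪ R i) = (t * c) * (t * (t * c) - 1) := by
    intro i
    rw [Nat.card_coe_set_eq, Set.ncard_union_eq (hdisjPR i i) (Set.toFinite _)
      (Set.toFinite _), ← Nat.card_coe_set_eq, ← Nat.card_coe_set_eq,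
      hcardP' i, hRcard i]
    zify [ht, htc, httc]
    ring
  -- character sums of P'
  have hPsum : ∀ (χ : G →* ℂˣ) (χt : (V ⧸ N) →* ℂˣ),
      (∀ v : ↥V, χt (QuotientGroup.mk v) = χ ↑v) → ∀ i,
      charSum χ (P' i) = (t : ℂ) * charSum χt (P i) := by
    intro χ χt hχt i
    show charSum χ (Subtype.val '' ((QuotientGroup.mk (s := N)) ⁻¹' P i)) = _
    rw [charSum_image_val V χ ((QuotientGroup.mk (s := N)) ⁻¹' P i),
      sum_indicator (fun v : ↥V => (χ ↑v : ℂ)) _]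
    have hpt : ∀ v : ↥V, (if v ∈ (QuotientGroup.mk (s := N)) ⁻¹' P i then (χ ↑v : ℂ) else 0)
        = (fun q => if q ∈ P i then ((χt q : ℂ)) else 0) ((QuotientGroup.mk v : V ⧸ N)) := by
      intro v
      by_cases hv : (QuotientGroup.mk v : V ⧸ N) ∈ P i
      · have hv' : v ∈ (QuotientGroup.mk (s := N)) ⁻¹' P i := hv
        rw [if_pos hv']
        simp only [hv, if_pos]
        rw [hχt v]
      · have hv' : v ∉ (QuotientGroup.mk (s := N)) ⁻¹' P i := hv
        simp [hv, hv']
    rw [Finset.sum_congr rfl (fun v _ => hpt v)]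
    have h2 : ∑ v : ↥V, (fun q => if q ∈ P i then ((χt q : ℂ)) else 0)
          ((QuotientGroup.mk v : ↥V ⧸ N))
        = (Nat.card ↥N : ℂ) * ∑ q : ↥V ⧸ N, (if q ∈ P i then ((χt q : ℂ)) else 0) :=
      sum_quotient_fiber N (fun q => if q ∈ P i then ((χt q : ℂ)) else 0)
    rw [h2, hNcard, ← charSum_eq_sum_ite]
  have hlift : ∀ χ : G →* ℂˣ, IsPrincipalOn χ H →
      ∃ χt : (V ⧸ N) →* ℂˣ, ∀ v : ↥V, χt (QuotientGroup.mk v) = χ ↑v := by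
    intro χ hχ
    refine ⟨QuotientGroup.lift N (χ.comp V.subtype) (fun v hv => ?_), fun v => ?_⟩
    · show χ ↑v = 1
      exact hχ ↑v (Subgroup.mem_subgroupOf.mp hv)
    · exact QuotientGroup.lift_mk _ _ _
  have hPzero : ∀ χ : G →* ℂˣ, ¬ IsPrincipalOn χ H → ∀ i, charSum χ (P' i) = 0 := by
    intro χ hχ i
    simp only [IsPrincipalOn, not_forall] at hχ
    obtain ⟨x, hxH, hx⟩ := hχ
    refine charSum_eq_zero_of_smul χ _ x (fun h => hx (Units.ext h)) ?_
    rintro d ⟨v, hv, rfl⟩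
    have hxV : x ∈ V := hUV (hHU hxH)
    have hxN : (⟨x, hxV⟩ : ↥V) ∈ N := Subgroup.mem_subgroupOf.mpr hxH
    refine ⟨(⟨x, hxV⟩ : ↥V) * v, ?_, rfl⟩
    show (QuotientGroup.mk ((⟨x, hxV⟩ : ↥V) * v) : V ⧸ N) ∈ P i
    rw [QuotientGroup.mk_mul, (QuotientGroup.eq_one_iff _).mpr hxN, one_mul]
    exact hv
  -- the master character computation
  have hvals : ∀ i, ∀ χ : G →* ℂˣ, χ ≠ 1 →
      charSum χ (P' i ∪ R i) = ((t * (t * c) : ℕ) : ℂ) - ((t * c : ℕ) : ℂ) ∨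
      charSum χ (P' i ∪ R i) = -((t * c : ℕ) : ℂ) := by
    intro i χ hχ
    have hdecomp : charSum χ (P' i ∪ R i) = charSum χ (P' i) + charSum χ (R i) :=
      charSum_union_disjoint χ _ _ (hdisjPR i i)
    have hRmem : charSum χ (R i) ∈ charMultiset χ R :=
      Multiset.mem_map.mpr ⟨i, Finset.mem_val.mpr (Finset.mem_univ i), rfl⟩
    by_cases hPrH : IsPrincipalOn χ H
    · obtain ⟨χt, hχt⟩ := hlift χ hPrH
      have hPs := hPsum χ χt hχt i
      by_cases hPrV : IsPrincipalOn χ V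
      · have hPt : charSum χt (P i) = ((c * (t * c - 1) : ℕ) : ℂ) := by
          rw [← (hPlatin i).1.2.1]
          refine charSum_const_one χt (P i) ?_
          intro q _
          obtain ⟨v, rfl⟩ := QuotientGroup.mk_surjective q
          rw [hχt v, hPrV ↑v v.2, Units.val_one]
        have hRs : charSum χ (R i) = -(((t * c : ℕ)) : ℂ) ^ 2 := by
          rw [(hRchar χ hχ).1 hPrV] at hRmem
          exact Multiset.eq_of_mem_replicate hRmem
        right
        rw [hdecomp, hPs, hPt, hRs, Nat.cast_mul, Nat.cast_sub htc]
        push_cast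
        ring
      · have hχt1 : χt ≠ 1 := by
          intro h
          apply hPrV
          intro u hu
          have h2 := hχt ⟨u, hu⟩
          rw [h] at h2
          exact h2.symm.trans rfl
        have hRs : charSum χ (R i) = 0 := by
          rw [(hRchar χ hχ).2.1 hPrV hPrH] at hRmem
          exact Multiset.eq_of_mem_replicate hRmem
        rcases latin_charSum_mem (P i) (t * c) c htc (hPlatin i) χt hχt1 with h | h
        · left
          rw [hdecomp, hPs, h, hRs]
          push_cast
          ring
        · right
          rw [hdecomp, hPs, h, hRs]
          push_cast
          ring
    · have hPs := hPzero χ hPrH i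
      rw [(hRchar χ hχ).2.2 hPrH] at hRmem
      rcases Multiset.mem_cons.mp hRmem with h | h
      · left
        rw [hdecomp, hPs, h]
        push_cast
        ring
      · right
        rw [hdecomp, hPs, Multiset.eq_of_mem_replicate h]
        push_cast
        ring
  -- symmetry
  have hsym : ∀ i, (P' i ∪ R i)⁻¹ = P' i ∪ R i := by
    intro i
    refine eq_of_charSum_eq _ _ (fun χ => ?_)
    rw [charSum_inv_eq_conj]
    by_cases hχ : χ = 1
    · subst hχ
      rw [charSum_const_one _ _ (fun d _ => by simp)]
      exact Complex.conj_natCast _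
    · rcases hvals i χ hχ with h | h <;> rw [h] <;> simp
  refine ⟨by rw [hG]; ring, by rw [hU]; ring, fun i => ?_, fun i j hij => ?_, ?_⟩
  · show IsLatinPDS (P' i ∪ R i) (t * (t * c)) (t * c)
    exact isLatinPDS_of_charSum _ _ _ httc (by rw [hG]; ring) (hcardD i) (hDone i)
      (hsym i) (hvals i)
  · show Disjoint (P' i ∪ R i) (P' j ∪ R j)
    rw [Set.disjoint_union_left]
    constructor
    · rw [Set.disjoint_union_right]
      exact ⟨Set.disjoint_image_of_injective Subtype.val_injective
        ((hPdisj i j hij).preimage _), hdisjPR i j⟩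
    · rw [Set.disjoint_union_right]
      exact ⟨(hdisjPR j i).symm, hRdisj i j hij⟩
  · show (⋃ i, (P' i ∪ R i)) = Set.univ \ (U : Set G)
    rw [Set.iUnion_union_distrib]
    have hPU' : (⋃ i, P' i) = (V : Set G) \ (U : Set G) := by
      have h1 : (⋃ i, P' i)
          = Subtype.val '' ((QuotientGroup.mk (s := N)) ⁻¹' (⋃ i, P i)) := by
        rw [Set.preimage_iUnion, Set.image_iUnion]
      have hcomap : Subgroup.comap (QuotientGroup.mk' N)
          ((U.subgroupOf V).map (QuotientGroup.mk' N)) = U.subgroupOf V := by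
        rw [Subgroup.comap_map_eq, QuotientGroup.ker_mk']
        exact sup_eq_left.mpr
          (fun x hx => Subgroup.mem_subgroupOf.mpr (hHU (Subgroup.mem_subgroupOf.mp hx)))
      rw [h1, hPunion]
      ext x
      simp only [Set.mem_image, Set.mem_preimage, Set.mem_diff, Set.mem_univ, true_and,
        SetLike.mem_coe]
      constructor
      · rintro ⟨v, hv, rfl⟩
        refine ⟨v.2, fun hxU => hv ?_⟩
        have : v ∈ U.subgroupOf V := Subgroup.mem_subgroupOf.mpr hxU
        rw [← hcomap] at this
        exact this
      · rintro ⟨hxV, hxU⟩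
        refine ⟨⟨x, hxV⟩, fun h => hxU ?_, rfl⟩
        have : (⟨x, hxV⟩ : ↥V) ∈ Subgroup.comap (QuotientGroup.mk' N)
            ((U.subgroupOf V).map (QuotientGroup.mk' N)) := h
        rw [hcomap] at this
        exact Subgroup.mem_subgroupOf.mp this
    rw [hPU', hRunion]
    ext x
    simp only [Set.mem_union, Set.mem_diff, Set.mem_univ, true_and, SetLike.mem_coe]
    constructor
    · rintro (⟨hxV, hxU⟩ | hxV)
      · exact hxU
      · exact fun hxU => hxV (hUV hxU)
    · intro hxU
      by_cases hxV : x ∈ V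
      · exact Or.inl ⟨hxV, hxU⟩
      · exact Or.inr hxV
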